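/- For 0 ≤ V ≤ 1/√2, the Mermin family admits the decomposition P(abc|xyz) = (1/4) Σ_{λ=0}^{3} P_λ(ab|xy) · D_λ(c|z) where D_λ(c|z) is the deterministic distribution c = αz⊕β for λ=2α+β, and the P_λ(ab|xy) are the four explicitly given bipartite distributions of the form (1 ± (-1)^{a⊕b} V)/4 depending on (x,y) as in the paper's tables; each P_λ is a valid probability distribution. -/

import Mathlib

/-- The Mermin family of tripartite correlations. -/
noncomputable def mP (V : ℝ) (a b c x y z : Fin 2) : ℝ :=
  (1 + (-1 : ℝ) ^ ((a + b + c + x * y + y * z + x * z : Fin 2) : ℕ) *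
    (if x + y + 1 = z then V else 0)) / 8

/-- The deterministic distribution `D_{(α,β)}(c|z)`, equal to 1 iff `c = α·z ⊕ β`. -/
def Ddet (l : Fin 2 × Fin 2) (c z : Fin 2) : ℝ := if c = l.1 * z + l.2 then 1 else 0

set_option maxHeartbeats 2000000 in
theorem stmt8 (V : ℝ) (h0 : 0 ≤ V) (h1 : V ≤ 1 / Real.sqrt 2) :
    ∃ P : Fin 2 × Fin 2 → Fin 2 → Fin 2 → Fin 2 → Fin 2 → ℝ,
      (∀ l a b x y, 0 ≤ P l a b x y) ∧
      (∀ l x y, ∑ a : Fin 2, ∑ b : Fin 2, P l a b x y = 1) ∧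
      (∀ a b x y : Fin 2, P (0, 0) a b x y =
        if x = 1 ∧ y = 1 then (1 - (-1 : ℝ) ^ ((a + b : Fin 2) : ℕ) * V) / 4
        else (1 + (-1 : ℝ) ^ ((a + b : Fin 2) : ℕ) * V) / 4) ∧
      (∀ a b c x y z : Fin 2,
        mP V a b c x y z = (1 / 4) * ∑ l : Fin 2 × Fin 2, P l a b x y * Ddet l c z) := by
  have hV1 : V ≤ 1 := by
    refine h1.trans ?_
    rw [div_le_one (by positivity)]
    nlinarith [Real.sq_sqrt (by norm_num : (2:ℝ) ≥ 0), Real.sqrt_nonneg 2]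
  have e0 : ((0 : Fin 2) : ℕ) = 0 := rfl
  have e1 : ((1 : Fin 2) : ℕ) = 1 := rfl
  have e2 : ((2 : Fin 2) : ℕ) = 0 := rfl
  have e3 : ((3 : Fin 2) : ℕ) = 1 := rfl
  have e4 : ((4 : Fin 2) : ℕ) = 0 := rfl
  have e5 : ((5 : Fin 2) : ℕ) = 1 := rfl
  have e6 : ((6 : Fin 2) : ℕ) = 0 := rfl
  have f2 : (2 : Fin 2) = 0 := rfl
  have f3 : (3 : Fin 2) = 1 := rfl
  have f4 : (4 : Fin 2) = 0 := rfl
  have f5 : (5 : Fin 2) = 1 := rfl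
  refine ⟨fun l a b x y =>
    (1 + (-1 : ℝ) ^ ((l.2 + x * y + l.1 * (x + y + 1) : Fin 2) : ℕ) *
      (-1 : ℝ) ^ ((a + b : Fin 2) : ℕ) * V) / 4, ?_, ?_, ?_, ?_⟩
  · rintro ⟨l1, l2⟩ a b x y
    fin_cases l1 <;> fin_cases l2 <;> fin_cases a <;> fin_cases b <;> fin_cases x <;>
      fin_cases y <;> norm_num [e0, e1, e2, e3, e4, e5, Fin.val_add] <;> linarith
  · rintro ⟨l1, l2⟩ x y
    simp only [Fin.sum_univ_two]
    fin_cases l1 <;> fin_cases l2 <;> fin_cases x <;> fin_cases y <;>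
      norm_num [e0, e1, e2, e3, e4, e5, Fin.val_add] <;> ring
  · intro a b x y
    fin_cases a <;> fin_cases b <;> fin_cases x <;> fin_cases y <;>
      norm_num [e0, e1, e2, e3, e4, e5, Fin.val_add] <;> ring
  · intro a b c x y z
    rw [Fintype.sum_prod_type]
    simp only [Fin.sum_univ_two]
    fin_cases a <;> fin_cases b <;> fin_cases c <;> fin_cases x <;> fin_cases y <;>
      fin_cases z <;>
      norm_num [mP, Ddet, e0, e1, e2, e3, e4, e5, e6, f2, f3, f4, f5, Fin.ext_iff, Fin.val_add] <;> ring
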